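/- If H is a graph whose largest independent set has size at most 2, then H has a Hamiltonian cycle or V(H) can be partitioned into two (possibly empty) cliques. -/

import Mathlib

set_option linter.unusedSectionVars false

open SimpleGraph List

section Aux

variable {V : Type*} [DecidableEq V] {H : SimpleGraph V}

lemma chain_split {α : Type*} {R : α → α → Prop} {a b : α} {l : List α}
    (h : List.Chain R a (b :: l)) : R a b ∧ List.Chain R b l := List.chain_cons.mp h

/-- Build a walk from a chain of adjacencies. -/
def mkWalk (H : SimpleGraph V) : ∀ (a : V) (l : List V), List.Chain H.Adj a l →
    H.Walk a (l.getLastD a)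
  | _, [], _ => SimpleGraph.Walk.nil
  | a, b :: l, h =>
      SimpleGraph.Walk.cons (chain_split h).1
        ((mkWalk H b l (chain_split h).2).copy rfl (List.getLastD_cons (a := a) (b := b) (l := l)).symm)

@[simp] lemma mkWalk_support (a : V) (l : List V) (h : List.Chain H.Adj a l) :
    (mkWalk H a l h).support = a :: l := by
  induction l generalizing a with
  | nil => rfl
  | cons b l ih => simp [mkWalk, ih]

@[simp] lemma mkWalk_edges (a : V) (l : List V) (h : List.Chain H.Adj a l) :
    (mkWalk H a l h).edges = List.zipWith (fun x y => s(x, y)) (a :: l) l := by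
  induction l generalizing a with
  | nil => rfl
  | cons b l ih => simp [mkWalk, ih]

lemma mkWalk_edge_head {a b : V} {l : List V} (h : List.Chain H.Adj a (b :: l))
    (ha : a ∉ b :: l) {e : Sym2 V} (he : e ∈ (mkWalk H a (b :: l) h).edges)
    (hae : a ∈ e) : e = s(a, b) := by
  rw [mkWalk_edges] at he
  simp only [List.zipWith_cons_cons, List.mem_cons] at he
  rcases he with he | he
  · exact he
  · exfalso
    have hsub : e ∈ (mkWalk H b l (chain_split h).2).edges := by
      rw [mkWalk_edges]; exact he
    induction e with
    | h x y =>
      rcases Sym2.mem_iff.mp hae with rfl | rfl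
      · have := SimpleGraph.Walk.fst_mem_support_of_mem_edges _ hsub
        rw [mkWalk_support] at this; exact ha this
      · have := SimpleGraph.Walk.snd_mem_support_of_mem_edges _ hsub
        rw [mkWalk_support] at this; exact ha this

/-- A list representing a cycle. -/
def IsCyc (H : SimpleGraph V) (l : List V) : Prop :=
  3 ≤ l.length ∧ l.Nodup ∧ l.Chain' H.Adj ∧
    ∀ x ∈ l.getLast?, ∀ y ∈ l.head?, H.Adj x y

lemma isCyc_exists_hamCycle [Fintype V] {l : List V} (hc : IsCyc H l)
    (hcov : ∀ v : V, v ∈ l) :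
    ∃ (a : V) (c : H.Walk a a), c.IsHamiltonianCycle := by
  obtain ⟨hlen, hnd, hch, hwrap⟩ := hc
  match l, hlen with
  | a :: b :: c0 :: t'', _ =>
  set t' : List V := c0 :: t'' with ht'
  have hnd' : (a :: b :: t').Nodup := hnd
  have hab : H.Adj a b := (List.isChain_cons_cons.mp hch).1
  have hch2 : List.Chain' H.Adj (b :: t') := (List.isChain_cons_cons.mp hch).2
  have hlast : H.Adj ((b :: t').getLast (by simp)) a := by
    have h1 : (a :: b :: t').getLast? = (b :: t').getLast? := by
      simp [List.getLast?_eq_getLast]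
    apply hwrap
    · rw [h1, List.getLast?_eq_getLast (l := b :: t') (by simp)]; rfl
    · rfl
  have hch3 : List.Chain H.Adj b (t' ++ [a]) := by
    show List.Chain' H.Adj (b :: t' ++ [a])
    apply List.IsChain.append hch2 (List.isChain_singleton a)
    intro x hx y hy
    simp only [List.head?_cons, Option.mem_def, Option.some_inj] at hy
    rw [List.getLast?_eq_getLast (l := b :: t') (by simp), Option.mem_def, Option.some_inj] at hx
    subst hx; subst hy; exact hlast
  have hP := mkWalk H b (t' ++ [a]) hch3
  set P : H.Walk b a := (mkWalk H b (t' ++ [a]) hch3).copy rfl List.getLastD_concat with hPdef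
  have hPsup : P.support = b :: (t' ++ [a]) := by
    rw [hPdef, SimpleGraph.Walk.support_copy, mkWalk_support]
  have hanb : a ∉ b :: t' := by
    intro h; exact (List.nodup_cons.mp hnd').1 h
  have hPnd : P.support.Nodup := by
    rw [hPsup]
    have : (b :: (t' ++ [a])) = (b :: t') ++ [a] := by simp
    rw [this, List.nodup_append]
    refine ⟨(List.nodup_cons.mp hnd').2, List.nodup_singleton a, ?_⟩
    intro x hx y hy
    simp only [List.mem_singleton] at hy
    subst hy
    rintro rfl
    exact hanb hx
  have hPpath : P.IsPath := SimpleGraph.Walk.IsPath.mk' hPnd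
  have hed : s(a, b) ∉ P.edges := by
    intro hmem
    rw [hPdef, SimpleGraph.Walk.edges_copy] at hmem
    have : t' ++ [a] = c0 :: (t'' ++ [a]) := by simp [ht']
    have heq : s(a, b) = s(b, c0) := by
      apply mkWalk_edge_head (l := t'' ++ [a]) (this ▸ hch3)
      · rw [← this]
        intro hmem'
        rcases List.mem_append.mp hmem' with h | h
        · exact (List.nodup_cons.mp (List.nodup_cons.mp hnd').2).1 h
        · simp only [List.mem_singleton] at h
          exact H.irrefl (h ▸ hab)
      · exact (by
          revert hmem
          congr 1 <;> try rw [← this]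
          exact fun hmem => by rwa [mkWalk_edges] at hmem ⊢ <;> rw [← this])
      · exact Sym2.mem_mk_right a b
    rw [Sym2.eq, Sym2.rel_iff', Prod.mk.injEq, Prod.mk.injEq] at heq
    rcases heq with ⟨h1, h2⟩ | ⟨h1, h2⟩
    · exact H.irrefl (h1 ▸ hab)
    · simp only [Prod.swap_prod_mk] at h1 h2
      apply hanb
      rw [h1]
      simp [ht']
  have hcyc : (SimpleGraph.Walk.cons hab P).IsCycle := by
    rw [SimpleGraph.Walk.cons_isCycle_iff]
    exact ⟨hPpath, hed⟩
  refine ⟨a, SimpleGraph.Walk.cons hab P, ?_⟩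
  rw [SimpleGraph.Walk.isHamiltonianCycle_iff_isCycle_and_support_count_tail_eq_one]
  refine ⟨hcyc, fun v => ?_⟩
  have hsup : (SimpleGraph.Walk.cons hab P).support.tail = b :: (t' ++ [a]) := by
    rw [SimpleGraph.Walk.support_cons, List.tail_cons, hPsup]
  rw [hsup]
  have hmem : v ∈ b :: (t' ++ [a]) := by
    have := hcov v
    rcases List.mem_cons.mp this with rfl | h
    · simp
    · rcases List.mem_cons.mp h with rfl | h
      · simp
      · simp [h]
  have hle := List.nodup_iff_count_le_one.mp (hPsup ▸ hPnd) v
  have hge := List.count_pos_iff.mpr hmem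
  omega

end Aux


section Main

variable {V : Type*} [DecidableEq V] {H : SimpleGraph V}

lemma perm_toFinset {l l' : List V} (h : l.Perm l') : l.toFinset = l'.toFinset := by
  ext x; simp [List.mem_toFinset, h.mem_iff]

lemma nodup_of_card_toFinset {l : List V} (h : l.toFinset.card = l.length) : l.Nodup := by
  have h2 := Multiset.toFinset_card_eq_card_iff_nodup (m := (l : Multiset V))
  simp only [Multiset.coe_card, Multiset.coe_nodup] at h2
  exact h2.mp h

lemma chain'_rev {l : List V} (h : l.Chain' H.Adj) : l.reverse.Chain' H.Adj := by
  refine List.isChain_reverse.mpr ?_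
  exact List.IsChain.imp (fun a b hab => hab.symm) h

lemma chain'_of_forall_adj {l : List V} (hnd : l.Nodup)
    (h : ∀ x ∈ l, ∀ y ∈ l, x ≠ y → H.Adj x y) : l.Chain' H.Adj :=
  (List.Pairwise.imp_of_mem (fun ha hb hne => h _ ha _ hb hne) hnd).isChain

lemma getLast?_cons_of_ne_nil {m : List V} (hm : m ≠ []) (z : V) :
    (z :: m).getLast? = m.getLast? := by
  cases m with
  | nil => exact absurd rfl hm
  | cons b t => rw [List.getLast?_cons_cons]

lemma isCyc_rotate {l₁ l₂ : List V} (h : IsCyc H (l₁ ++ l₂)) : IsCyc H (l₂ ++ l₁) := by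
  cases l₁ with
  | nil => simpa using h
  | cons x xs =>
    cases l₂ with
    | nil => simpa using h
    | cons y ys =>
      obtain ⟨hlen, hnd, hch, hwrap⟩ := h
      obtain ⟨c1, c2, j⟩ := List.isChain_append.mp hch
      refine ⟨?_, List.perm_append_comm.nodup hnd, ?_, ?_⟩
      · simp only [List.length_append] at hlen ⊢; omega
      · refine List.IsChain.append c2 c1 (fun p hp q hq => ?_)
        refine hwrap p ?_ q ?_
        · rw [List.getLast?_append_cons]; exact hp
        · simpa using hq
      · intro p hp q hq
        refine j p ?_ q ?_
        · rwa [List.getLast?_append_cons] at hp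
        · simpa using hq

lemma isCyc_cons {a : V} {l : List V} (hc : IsCyc H l) (hal : a ∉ l)
    (h1 : ∀ y ∈ l.head?, H.Adj a y) (h2 : ∀ x ∈ l.getLast?, H.Adj x a) :
    IsCyc H (a :: l) := by
  obtain ⟨hlen, hnd, hch, _⟩ := hc
  refine ⟨by simp only [List.length_cons]; omega, List.nodup_cons.mpr ⟨hal, hnd⟩,
    List.IsChain.cons hch h1, ?_⟩
  intro p hp q hq
  simp only [List.head?_cons, Option.mem_def, Option.some_inj] at hq
  subst hq
  apply h2
  cases l with
  | nil => simp at hlen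
  | cons b t => rwa [List.getLast?_cons_cons] at hp

lemma adj_of_nonadj (hindep : ∀ s : Set V, s.Pairwise (fun a b => ¬ H.Adj a b) → s.ncard ≤ 2)
    {a x y : V} (hxy : x ≠ y) (hax : a ≠ x) (hay : a ≠ y)
    (h1 : ¬ H.Adj a x) (h2 : ¬ H.Adj a y) : H.Adj x y := by
  by_contra h3
  have hp : ({a, x, y} : Set V).Pairwise (fun u v => ¬ H.Adj u v) := by
    intro u hu v hv huv
    simp only [Set.mem_insert_iff, Set.mem_singleton_iff] at hu hv
    rcases hu with rfl | rfl | rfl <;> rcases hv with rfl | rfl | rfl <;>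
      first
        | exact absurd rfl huv
        | assumption
        | exact fun h => h1 h.symm
        | exact fun h => h2 h.symm
        | exact fun h => h3 h.symm
  have hcard := hindep _ hp
  rw [Set.ncard_insert_of_notMem (by simp [hax, hay]) (Set.toFinite _),
      Set.ncard_insert_of_notMem (by simp [hxy]) (Set.toFinite _),
      Set.ncard_singleton] at hcard
  omega

lemma key (hindep : ∀ s : Set V, s.Pairwise (fun a b => ¬ H.Adj a b) → s.ncard ≤ 2)
    (s : Finset V) :
    (∃ l : List V, IsCyc H l ∧ l.toFinset = s) ∨
    (∃ A B : Finset V, A ∪ B = s ∧ Disjoint A B ∧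
      (∀ x ∈ A, ∀ y ∈ A, x ≠ y → H.Adj x y) ∧ (∀ x ∈ B, ∀ y ∈ B, x ≠ y → H.Adj x y)) := by
  classical
  induction s using Finset.induction_on with
  | empty => exact Or.inr ⟨∅, ∅, by simp, by simp, by simp, by simp⟩
  | @insert a s ha ih =>
    have hxa : ∀ x ∈ s, x ≠ a := fun x hx hxe => ha (hxe ▸ hx)
    rcases ih with ⟨l, hcyc, hcov⟩ | ⟨A, B, hAB, hdisj, hA, hB⟩
    · -- cycle case
      have hmem : ∀ v, v ∈ l ↔ v ∈ s := fun v => by rw [← hcov, List.mem_toFinset]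
      by_cases h0 : ∀ v ∈ s, ¬ H.Adj a v
      · right
        refine ⟨{a}, s, ?_, ?_, by simp, ?_⟩
        · exact (Finset.insert_eq a s).symm
        · simp [Finset.disjoint_singleton_left, ha]
        · intro x hx y hy hne
          exact adj_of_nonadj hindep hne (hxa x hx).symm (hxa y hy).symm (h0 x hx) (h0 y hy)
      push_neg at h0
      obtain ⟨u, hu_s, hu⟩ := h0
      by_cases h1 : ∀ v ∈ s, v ≠ u → ¬ H.Adj a v
      · right
        refine ⟨insert a {u}, s.erase u, ?_, ?_, ?_, ?_⟩
        · rw [Finset.insert_union]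
          congr 1
          rw [← Finset.insert_eq, Finset.insert_erase hu_s]
        · rw [Finset.disjoint_left]
          intro v hv hv2
          simp only [Finset.mem_insert, Finset.mem_singleton] at hv
          rcases hv with rfl | rfl
          · exact ha (Finset.mem_of_mem_erase hv2)
          · exact (Finset.mem_erase.mp hv2).1 rfl
        · intro p hp q hq hne
          simp only [Finset.mem_insert, Finset.mem_singleton] at hp hq
          rcases hp with rfl | rfl <;> rcases hq with rfl | rfl
          · exact absurd rfl hne
          · exact hu
          · exact hu.symm
          · exact absurd rfl hne
        · intro p hp q hq hne
          rw [Finset.mem_erase] at hp hq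
          exact adj_of_nonadj hindep hne (hxa p hp.2).symm (hxa q hq.2).symm
            (h1 p hp.2 hp.1) (h1 q hq.2 hq.1)
      push_neg at h1
      obtain ⟨u', hu'_s, hu'_ne, hu'⟩ := h1
      have hul : u ∈ l := (hmem u).mpr hu_s
      obtain ⟨l1, l2, hl_split⟩ := List.append_of_mem hul
      have hcyc1 : IsCyc H (u :: (l2 ++ l1)) := by
        have h' : IsCyc H ((u :: l2) ++ l1) := isCyc_rotate (by rwa [← hl_split])
        simpa using h'
      set t : List V := l2 ++ l1 with ht
      have hperm0 : u :: t ~ l := by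
        rw [hl_split, ht]
        calc u :: (l2 ++ l1) = (u :: l2) ++ l1 := by simp
          _ ~ l1 ++ (u :: l2) := List.perm_append_comm
      have hcov' : (u :: t).toFinset = s := by rw [perm_toFinset hperm0, hcov]
      have hmem' : ∀ v, v ∈ u :: t ↔ v ∈ s := fun v => by
        rw [← hcov', List.mem_toFinset]
      have ha_nl : a ∉ u :: t := fun h => ha ((hmem' a).mp h)
      by_cases h2 : H.Adj a ((u :: t).getLast (List.cons_ne_nil u t))
      · left
        refine ⟨a :: u :: t, isCyc_cons hcyc1 ha_nl ?_ ?_, ?_⟩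
        · intro y hy
          simp only [List.head?_cons, Option.mem_def, Option.some_inj] at hy
          subst hy; exact hu
        · intro p hp
          rw [List.getLast?_eq_getLast (List.cons_ne_nil u t), Option.mem_def,
            Option.some_inj] at hp
          subst hp; exact h2.symm
        · rw [List.toFinset_cons, hcov']
      by_cases h3 : ∃ w w' m1 m2, u :: t = m1 ++ w :: w' :: m2 ∧ H.Adj a w ∧ H.Adj a w'
      · obtain ⟨w, w', m1, m2, hsplit, haw, haw'⟩ := h3
        have hrot : IsCyc H ((w' :: m2) ++ (m1 ++ [w])) :=
          isCyc_rotate (l₁ := m1 ++ [w]) (by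
            have he : (m1 ++ [w]) ++ (w' :: m2) = m1 ++ w :: w' :: m2 := by simp
            rw [he, ← hsplit]; exact hcyc1)
        left
        have hpermr : (w' :: m2) ++ (m1 ++ [w]) ~ u :: t := by
          rw [hsplit]
          calc (w' :: m2) ++ (m1 ++ [w]) ~ (m1 ++ [w]) ++ (w' :: m2) := List.perm_append_comm
            _ = m1 ++ w :: w' :: m2 := by simp
        refine ⟨a :: ((w' :: m2) ++ (m1 ++ [w])), isCyc_cons hrot ?_ ?_ ?_, ?_⟩
        · intro hmm
          exact ha_nl (hpermr.mem_iff.mp hmm)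
        · intro y hy
          simp only [List.cons_append, List.head?_cons, Option.mem_def, Option.some_inj] at hy
          subst hy; exact haw'
        · intro p hp
          rw [List.getLast?_append, List.getLast?_concat] at hp
          simp only [Option.some_or, Option.mem_def, Option.some_inj] at hp
          subst hp; exact haw.symm
        · rw [List.toFinset_cons, perm_toFinset hpermr, hcov']
      · push_neg at h3
        have hu'_t : u' ∈ t := by
          have hmm : u' ∈ u :: t := (hmem' u').mpr hu'_s
          rcases List.mem_cons.mp hmm with rfl | hmm
          · exact absurd rfl hu'_ne
          · exact hmm
        obtain ⟨t1, t2, ht_split⟩ := List.append_of_mem hu'_t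
        have ht1 : t1 ≠ [] := by
          rintro rfl
          exact h3 u u' [] t2 (by rw [ht_split]; simp) hu hu'
        have ht2 : t2 ≠ [] := by
          rintro rfl
          apply h2
          have h4 : (u :: t).getLast? = some u' := by
            rw [ht_split, getLast?_cons_of_ne_nil (by simp) u, List.getLast?_concat]
          rw [List.getLast?_eq_getLast (List.cons_ne_nil u t), Option.some_inj] at h4
          rw [h4]; exact hu'
        obtain ⟨x, t1', rfl⟩ := List.exists_cons_of_ne_nil ht1
        obtain ⟨x', t2', rfl⟩ := List.exists_cons_of_ne_nil ht2
        have hx_na : ¬ H.Adj a x := h3 u x [] (t1' ++ u' :: x' :: t2') (by rw [ht_split]; simp) hu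
        have hx'_na : ¬ H.Adj a x' :=
          h3 u' x' (u :: x :: t1') t2' (by rw [ht_split]; simp) hu'
        have hx_s : x ∈ s := (hmem' x).mp (by rw [ht_split]; simp)
        have hx'_s : x' ∈ s := (hmem' x').mp (by rw [ht_split]; simp)
        have hnd_t : t.Nodup := (List.nodup_cons.mp hcyc1.2.1).2
        have hxx'_ne : x ≠ x' := by
          rw [ht_split] at hnd_t
          have hdisj2 := (List.nodup_append.mp hnd_t).2.2
          intro he
          exact hdisj2 x List.mem_cons_self x' (by simp) he
        have hxx' : H.Adj x x' :=
          adj_of_nonadj hindep hxx'_ne (hxa x hx_s).symm (hxa x' hx'_s).symm hx_na hx'_na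
        -- decompose the chain of u :: t
        have hch_l : List.Chain' H.Adj (u :: ((x :: t1') ++ u' :: x' :: t2')) := by
          rw [← ht_split]; exact hcyc1.2.2.1
        have hch_l2 : List.Chain' H.Adj ((x :: t1') ++ u' :: x' :: t2') :=
          (List.isChain_cons.mp hch_l).2
        obtain ⟨chA, chB, jAB⟩ := List.isChain_append.mp hch_l2
        have hadj_u'x' : H.Adj u' x' := (List.isChain_cons_cons.mp chB).1
        have chB' : List.Chain' H.Adj (x' :: t2') := (List.isChain_cons_cons.mp chB).2
        have hgl_t : (u :: t).getLast? = (x' :: t2').getLast? := by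
          rw [ht_split, getLast?_cons_of_ne_nil (by simp) u, List.getLast?_append_cons,
            List.getLast?_cons_cons]
        have hlast_adj : ∀ p ∈ (x' :: t2').getLast?, H.Adj p u := by
          intro p hp
          exact hcyc1.2.2.2 p (by rw [hgl_t]; exact hp) u rfl
        -- the new cycle
        set c : List V := (a :: u' :: ((x :: t1').reverse ++ (x' :: t2'))) ++ [u] with hc_def
        have hperm : c ~ a :: u :: t := by
          rw [hc_def, ht_split]
          calc (a :: u' :: ((x :: t1').reverse ++ (x' :: t2'))) ++ [u]
              ~ u :: a :: u' :: ((x :: t1').reverse ++ (x' :: t2')) :=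
                List.perm_append_singleton _ _
            _ ~ u :: a :: u' :: ((x :: t1') ++ (x' :: t2')) :=
                (((List.reverse_perm _).append_right _).cons _).cons _ |>.cons _
            _ ~ a :: u :: u' :: ((x :: t1') ++ (x' :: t2')) := List.Perm.swap _ _ _
            _ ~ a :: u :: ((x :: t1') ++ u' :: (x' :: t2')) :=
                (List.perm_middle.symm.cons _).cons _
        have hnd_c : c.Nodup := hperm.nodup_iff.mpr (List.nodup_cons.mpr ⟨ha_nl, hcyc1.2.1⟩)
        have hch_c : List.Chain' H.Adj c := by
          refine List.IsChain.append ?_ (List.isChain_singleton u) ?_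
          · refine List.isChain_cons_cons.mpr ⟨hu', List.IsChain.cons ?_ ?_⟩
            · refine List.IsChain.append (chain'_rev chA) chB' ?_
              intro p hp q hq
              rw [List.getLast?_reverse] at hp
              simp only [List.head?_cons, Option.mem_def, Option.some_inj] at hp hq
              subst hp; subst hq
              exact hxx'
            · intro y hy
              rw [List.head?_append_of_ne_nil _ (by simp), List.head?_reverse] at hy
              have hy' : H.Adj y u' := jAB y hy u' rfl
              exact hy'.symm
          · intro p hp q hq
            simp only [List.head?_cons, Option.mem_def, Option.some_inj] at hq
            subst hq
            apply hlast_adj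
            rw [getLast?_cons_of_ne_nil (by simp) a, getLast?_cons_of_ne_nil (by simp) u',
              List.getLast?_append, List.getLast?_eq_getLast (List.cons_ne_nil x' t2'),
              Option.some_or] at hp
            rw [List.getLast?_eq_getLast (List.cons_ne_nil x' t2')]
            exact hp
        left
        refine ⟨c, ⟨?_, hnd_c, hch_c, ?_⟩, ?_⟩
        · have hll := hperm.length_eq
          rw [ht_split] at hll
          simp only [List.length_cons, List.length_append] at hll
          omega
        · intro p hp q hq
          rw [hc_def, List.getLast?_concat, Option.mem_def, Option.some_inj] at hp
          have hq' : a = q := by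
            rw [hc_def] at hq
            simpa using hq
          subst hp; subst hq'
          exact hu.symm
        · rw [perm_toFinset hperm, List.toFinset_cons, hcov']
    · -- partition case
      have memA : ∀ v ∈ A, v ∈ s := fun v hv => hAB ▸ Finset.mem_union_left _ hv
      have memB : ∀ v ∈ B, v ∈ s := fun v hv => hAB ▸ Finset.mem_union_right _ hv
      by_cases hallA : ∀ x ∈ A, H.Adj a x
      · right
        refine ⟨insert a A, B, ?_, ?_, ?_, hB⟩
        · rw [Finset.insert_union, hAB]
        · rw [Finset.disjoint_left]
          intro v hv hvB
          rcases Finset.mem_insert.mp hv with rfl | hvA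
          · exact ha (memB v hvB)
          · exact Finset.disjoint_left.mp hdisj hvA hvB
        · intro p hp q hq hne
          rcases Finset.mem_insert.mp hp with rfl | hp' <;>
            rcases Finset.mem_insert.mp hq with rfl | hq'
          · exact absurd rfl hne
          · exact hallA q hq'
          · exact (hallA p hp').symm
          · exact hA p hp' q hq' hne
      by_cases hallB : ∀ x ∈ B, H.Adj a x
      · right
        refine ⟨A, insert a B, ?_, ?_, hA, ?_⟩
        · rw [Finset.union_insert, hAB]
        · rw [Finset.disjoint_left]
          intro v hv hvB
          rcases Finset.mem_insert.mp hvB with rfl | hvB'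
          · exact ha (memA v hv)
          · exact Finset.disjoint_left.mp hdisj hv hvB'
        · intro p hp q hq hne
          rcases Finset.mem_insert.mp hp with rfl | hp' <;>
            rcases Finset.mem_insert.mp hq with rfl | hq'
          · exact absurd rfl hne
          · exact hallB q hq'
          · exact (hallB p hp').symm
          · exact hB p hp' q hq' hne
      push_neg at hallA hallB
      obtain ⟨x0, hx0A, hx0na⟩ := hallA
      obtain ⟨y0, hy0B, hy0na⟩ := hallB
      set NA := A.filter (fun v => H.Adj a v) with hNA_def
      set KA := A.filter (fun v => ¬ H.Adj a v) with hKA_def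
      set NB := B.filter (fun v => H.Adj a v) with hNB_def
      set KB := B.filter (fun v => ¬ H.Adj a v) with hKB_def
      have hmemNA : ∀ v, v ∈ NA ↔ v ∈ A ∧ H.Adj a v := fun v => by
        rw [hNA_def]; exact Finset.mem_filter
      have hmemKA : ∀ v, v ∈ KA ↔ v ∈ A ∧ ¬ H.Adj a v := fun v => by
        rw [hKA_def]; exact Finset.mem_filter
      have hmemNB : ∀ v, v ∈ NB ↔ v ∈ B ∧ H.Adj a v := fun v => by
        rw [hNB_def]; exact Finset.mem_filter
      have hmemKB : ∀ v, v ∈ KB ↔ v ∈ B ∧ ¬ H.Adj a v := fun v => by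
        rw [hKB_def]; exact Finset.mem_filter
      have hKAne : KA.Nonempty := ⟨x0, (hmemKA x0).mpr ⟨hx0A, hx0na⟩⟩
      have hKBne : KB.Nonempty := ⟨y0, (hmemKB y0).mpr ⟨hy0B, hy0na⟩⟩
      by_cases hNAe : NA = ∅
      · have hAnon : ∀ v ∈ A, ¬ H.Adj a v := by
          intro v hv hadj
          exact Finset.eq_empty_iff_forall_notMem.mp hNAe v ((hmemNA v).mpr ⟨hv, hadj⟩)
        right
        refine ⟨A ∪ KB, insert a NB, ?_, ?_, ?_, ?_⟩
        · ext v
          simp only [Finset.mem_union, Finset.mem_insert, hmemKB v, hmemNB v, ← hAB]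
          by_cases hadj : H.Adj a v <;> tauto
        · rw [Finset.disjoint_left]
          intro v hv hv2
          have hvs : v ∈ s := by
            rcases Finset.mem_union.mp hv with h | h
            · exact memA v h
            · exact memB v ((hmemKB v).mp h).1
          rcases Finset.mem_insert.mp hv2 with rfl | hv3
          · exact ha hvs
          · rcases Finset.mem_union.mp hv with h | h
            · exact Finset.disjoint_left.mp hdisj h ((hmemNB v).mp hv3).1
            · exact ((hmemKB v).mp h).2 ((hmemNB v).mp hv3).2
        · intro p hp q hq hne
          have hpna : p ∈ s ∧ ¬ H.Adj a p := by
            rcases Finset.mem_union.mp hp with h | h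
            · exact ⟨memA p h, hAnon p h⟩
            · exact ⟨memB p ((hmemKB p).mp h).1, ((hmemKB p).mp h).2⟩
          have hqna : q ∈ s ∧ ¬ H.Adj a q := by
            rcases Finset.mem_union.mp hq with h | h
            · exact ⟨memA q h, hAnon q h⟩
            · exact ⟨memB q ((hmemKB q).mp h).1, ((hmemKB q).mp h).2⟩
          exact adj_of_nonadj hindep hne (hxa p hpna.1).symm (hxa q hqna.1).symm hpna.2 hqna.2
        · intro p hp q hq hne
          rcases Finset.mem_insert.mp hp with rfl | hp' <;>
            rcases Finset.mem_insert.mp hq with rfl | hq'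
          · exact absurd rfl hne
          · exact ((hmemNB q).mp hq').2
          · exact ((hmemNB p).mp hp').2.symm
          · exact hB p ((hmemNB p).mp hp').1 q ((hmemNB q).mp hq').1 hne
      by_cases hNBe : NB = ∅
      · have hBnon : ∀ v ∈ B, ¬ H.Adj a v := by
          intro v hv hadj
          exact Finset.eq_empty_iff_forall_notMem.mp hNBe v ((hmemNB v).mpr ⟨hv, hadj⟩)
        right
        refine ⟨B ∪ KA, insert a NA, ?_, ?_, ?_, ?_⟩
        · ext v
          simp only [Finset.mem_union, Finset.mem_insert, hmemKA v, hmemNA v, ← hAB]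
          by_cases hadj : H.Adj a v <;> tauto
        · rw [Finset.disjoint_left]
          intro v hv hv2
          have hvs : v ∈ s := by
            rcases Finset.mem_union.mp hv with h | h
            · exact memB v h
            · exact memA v ((hmemKA v).mp h).1
          rcases Finset.mem_insert.mp hv2 with rfl | hv3
          · exact ha hvs
          · rcases Finset.mem_union.mp hv with h | h
            · exact Finset.disjoint_left.mp hdisj ((hmemNA v).mp hv3).1 h
            · exact ((hmemKA v).mp h).2 ((hmemNA v).mp hv3).2
        · intro p hp q hq hne
          have hpna : p ∈ s ∧ ¬ H.Adj a p := by
            rcases Finset.mem_union.mp hp with h | h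
            · exact ⟨memB p h, hBnon p h⟩
            · exact ⟨memA p ((hmemKA p).mp h).1, ((hmemKA p).mp h).2⟩
          have hqna : q ∈ s ∧ ¬ H.Adj a q := by
            rcases Finset.mem_union.mp hq with h | h
            · exact ⟨memB q h, hBnon q h⟩
            · exact ⟨memA q ((hmemKA q).mp h).1, ((hmemKA q).mp h).2⟩
          exact adj_of_nonadj hindep hne (hxa p hpna.1).symm (hxa q hqna.1).symm hpna.2 hqna.2
        · intro p hp q hq hne
          rcases Finset.mem_insert.mp hp with rfl | hp' <;>
            rcases Finset.mem_insert.mp hq with rfl | hq'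
          · exact absurd rfl hne
          · exact ((hmemNA q).mp hq').2
          · exact ((hmemNA p).mp hp').2.symm
          · exact hA p ((hmemNA p).mp hp').1 q ((hmemNA q).mp hq').1 hne
      · -- build a cycle through a, NA, KA, KB, NB
        have hNAne : NA.Nonempty := Finset.nonempty_of_ne_empty hNAe
        have hNBne : NB.Nonempty := Finset.nonempty_of_ne_empty hNBe
        left
        set c : List V := a :: (NA.toList ++ (KA.toList ++ (KB.toList ++ NB.toList)))
          with hc_def
        have hdisjAB : ∀ p ∈ A, ∀ q ∈ B, p ≠ q := by
          intro p hp q hq he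
          exact Finset.disjoint_left.mp hdisj hp (he ▸ hq)
        have chNA : List.Chain' H.Adj NA.toList := by
          refine chain'_of_forall_adj (Finset.nodup_toList _) ?_
          intro p hp q hq hne
          rw [Finset.mem_toList, hmemNA p] at hp
          rw [Finset.mem_toList, hmemNA q] at hq
          exact hA p hp.1 q hq.1 hne
        have chKA : List.Chain' H.Adj KA.toList := by
          refine chain'_of_forall_adj (Finset.nodup_toList _) ?_
          intro p hp q hq hne
          rw [Finset.mem_toList, hmemKA p] at hp
          rw [Finset.mem_toList, hmemKA q] at hq
          exact hA p hp.1 q hq.1 hne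
        have chKB : List.Chain' H.Adj KB.toList := by
          refine chain'_of_forall_adj (Finset.nodup_toList _) ?_
          intro p hp q hq hne
          rw [Finset.mem_toList, hmemKB p] at hp
          rw [Finset.mem_toList, hmemKB q] at hq
          exact hB p hp.1 q hq.1 hne
        have chNB : List.Chain' H.Adj NB.toList := by
          refine chain'_of_forall_adj (Finset.nodup_toList _) ?_
          intro p hp q hq hne
          rw [Finset.mem_toList, hmemNB p] at hp
          rw [Finset.mem_toList, hmemNB q] at hq
          exact hB p hp.1 q hq.1 hne
        have ch3 : List.Chain' H.Adj (KB.toList ++ NB.toList) := by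
          refine List.IsChain.append chKB chNB ?_
          intro p hp q hq
          have hp' := Finset.mem_toList.mp (List.mem_of_mem_getLast? hp)
          have hq' := Finset.mem_toList.mp (List.mem_of_mem_head? hq)
          rw [hmemKB p] at hp'
          rw [hmemNB q] at hq'
          refine hB p hp'.1 q hq'.1 ?_
          intro he
          exact hp'.2 (he ▸ hq'.2)
        have ch2 : List.Chain' H.Adj (KA.toList ++ (KB.toList ++ NB.toList)) := by
          refine List.IsChain.append chKA ch3 ?_
          intro p hp q hq
          have hp' := Finset.mem_toList.mp (List.mem_of_mem_getLast? hp)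
          rw [List.head?_append_of_ne_nil _ (Finset.Nonempty.toList_ne_nil hKBne)] at hq
          have hq' := Finset.mem_toList.mp (List.mem_of_mem_head? hq)
          rw [hmemKA p] at hp'
          rw [hmemKB q] at hq'
          exact adj_of_nonadj hindep (hdisjAB p hp'.1 q hq'.1)
            (hxa p (memA p hp'.1)).symm (hxa q (memB q hq'.1)).symm hp'.2 hq'.2
        have ch1 : List.Chain' H.Adj (NA.toList ++ (KA.toList ++ (KB.toList ++ NB.toList))) := by
          refine List.IsChain.append chNA ch2 ?_
          intro p hp q hq
          have hp' := Finset.mem_toList.mp (List.mem_of_mem_getLast? hp)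
          rw [List.head?_append_of_ne_nil _ (Finset.Nonempty.toList_ne_nil hKAne)] at hq
          have hq' := Finset.mem_toList.mp (List.mem_of_mem_head? hq)
          rw [hmemNA p] at hp'
          rw [hmemKA q] at hq'
          refine hA p hp'.1 q hq'.1 ?_
          intro he
          exact hq'.2 (he ▸ hp'.2)
        have hch_c : List.Chain' H.Adj c := by
          rw [hc_def]
          refine List.IsChain.cons ch1 ?_
          intro y hy
          rw [List.head?_append_of_ne_nil _ (Finset.Nonempty.toList_ne_nil hNAne)] at hy
          have hy' := Finset.mem_toList.mp (List.mem_of_mem_head? hy)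
          exact ((hmemNA y).mp hy').2
        have hcovc : c.toFinset = insert a s := by
          rw [hc_def]
          simp only [List.toFinset_cons, List.toFinset_append, Finset.toList_toFinset]
          congr 1
          rw [← Finset.union_assoc, hNA_def, hKA_def,
            Finset.filter_union_filter_not_eq _ A]
          have h5 : KB ∪ NB = B := by
            rw [Finset.union_comm, hNB_def, hKB_def, Finset.filter_union_filter_not_eq _ B]
          rw [h5, hAB]
        have hcards : NA.card + KA.card = A.card := by
          rw [hNA_def, hKA_def]
          exact Finset.card_filter_add_card_filter_not _
        have hcards2 : NB.card + KB.card = B.card := by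
          rw [hNB_def, hKB_def]
          exact Finset.card_filter_add_card_filter_not _
        have hlen_c : c.length = NA.card + KA.card + KB.card + NB.card + 1 := by
          rw [hc_def]
          simp only [List.length_cons, List.length_append, Finset.length_toList]
          omega
        have hcard_s : s.card = A.card + B.card := by
          rw [← hAB]
          exact Finset.card_union_of_disjoint hdisj
        have hnd_c : c.Nodup := by
          refine nodup_of_card_toFinset ?_
          rw [hcovc, Finset.card_insert_of_notMem ha, hlen_c, hcard_s]
          omega
        have hNAcard := Finset.Nonempty.card_pos hNAne
        have hNBcard := Finset.Nonempty.card_pos hNBne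
        have hKAcard := Finset.Nonempty.card_pos hKAne
        have hKBcard := Finset.Nonempty.card_pos hKBne
        refine ⟨c, ⟨?_, hnd_c, hch_c, ?_⟩, hcovc⟩
        · rw [hlen_c]; omega
        · intro p hp q hq
          have hq' : a = q := by
            rw [hc_def] at hq
            simpa using hq
          subst hq'
          rw [hc_def, getLast?_cons_of_ne_nil (by simp [Finset.Nonempty.toList_ne_nil hNAne]) a,
            List.getLast?_append_of_ne_nil _ (by simp [Finset.Nonempty.toList_ne_nil hNBne]),
            List.getLast?_append_of_ne_nil _ (by simp [Finset.Nonempty.toList_ne_nil hNBne]),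
            List.getLast?_append_of_ne_nil _ (Finset.Nonempty.toList_ne_nil hNBne)] at hp
          have hp' := Finset.mem_toList.mp (List.mem_of_mem_getLast? hp)
          exact ((hmemNB p).mp hp').2.symm

end Main

theorem stmt_15 {V : Type*} [Fintype V] [DecidableEq V] (H : SimpleGraph V)
    (hindep : ∀ s : Set V, s.Pairwise (fun a b => ¬ H.Adj a b) → s.ncard ≤ 2) :
    (∃ (a : V) (c : H.Walk a a), c.IsHamiltonianCycle) ∨
    (∃ A B : Set V, A ∪ B = Set.univ ∧ A ∩ B = ∅ ∧
      H.IsClique A ∧ H.IsClique B) := by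
  classical
  rcases key hindep (Finset.univ : Finset V) with ⟨l, hcyc, hcov⟩ | ⟨A, B, hAB, hdisj, hA, hB⟩
  · exact Or.inl (isCyc_exists_hamCycle hcyc (fun v => by
      have hv : v ∈ l.toFinset := by rw [hcov]; exact Finset.mem_univ v
      exact List.mem_toFinset.mp hv))
  · right
    refine ⟨(A : Set V), (B : Set V), ?_, ?_, ?_, ?_⟩
    · rw [← Finset.coe_union, hAB, Finset.coe_univ]
    · rw [← Finset.coe_inter, Finset.disjoint_iff_inter_eq_empty.mp hdisj, Finset.coe_empty]
    · intro p hp q hq hne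
      exact hA p (by exact_mod_cast hp) q (by exact_mod_cast hq) hne
    · intro p hp q hq hne
      exact hB p (by exact_mod_cast hp) q (by exact_mod_cast hq) hne
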